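/- Let n and j be positive integers with 1 ≤ j ≤ n. Then ∑_{l=0}^{j-1} (-1)^(j-l-1) · binomial(n-l-1, n-j) · binomial(n, l) · 1/(n-l)^3 = (H_n − H_{n-j})^3 / 6 + (H_n − H_{n-j})(H_n^{(2)} − H_{n-j}^{(2)}) / 2 + (H_n^{(3)} − H_{n-j}^{(3)}) / 3. -/

import Mathlib

/-- `harmonic' r k` is the `k`-th harmonic number of order `r`, i.e. `∑_{i=1}^k 1/i^r`. -/
def harmonic' (r k : ℕ) : ℚ := ∑ i ∈ Finset.Icc 1 k, 1 / (i : ℚ) ^ r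

private def S (n r j : ℕ) : ℚ :=
  ∑ l ∈ Finset.range j,
    (-1 : ℚ) ^ (j - l - 1) * ((n - l - 1).choose (n - j) : ℚ) * (n.choose l : ℚ) *
      (1 / ((n - l : ℕ) : ℚ) ^ r)

private lemma aux_alg (A B C c x y s : ℚ) (hx : x ≠ 0) (hc : c ≠ 0)
    (key : x * A = (A + B) * c) :
    (-s) * A * C * (y * (1 / x)) = s * B * C * (y * (1 / x)) + (-s) * A * C * y / c := by
  have h2 : A / c = (A + B) / x := by
    rw [div_eq_div_iff hc hx]
    linear_combination key
  linear_combination (s * C * y) * h2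

private lemma S_succ (n r j : ℕ) (hjn : j < n) :
    S n (r + 1) (j + 1) = S n (r + 1) j + S n r (j + 1) / ((n - j : ℕ) : ℚ) := by
  have hnj : ((n - j : ℕ) : ℚ) ≠ 0 := by
    have : 0 < n - j := Nat.sub_pos_of_lt hjn
    positivity
  unfold S
  simp only [show n - (j+1) = n - j - 1 from by omega]
  have htop : (-1 : ℚ) ^ (j - j - 1) * ((n - j - 1).choose (n - j) : ℚ) * (n.choose j : ℚ) *
      (1 / ((n - j : ℕ) : ℚ) ^ (r+1)) = 0 := by
    have : (n - j - 1).choose (n - j) = 0 := Nat.choose_eq_zero_of_lt (by omega)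
    simp [this]
  rw [show (∑ l ∈ Finset.range j,
      (-1 : ℚ) ^ (j - l - 1) * ((n - l - 1).choose (n - j) : ℚ) * (n.choose l : ℚ) *
        (1 / ((n - l : ℕ) : ℚ) ^ (r+1))) =
      ∑ l ∈ Finset.range (j+1),
      (-1 : ℚ) ^ (j - l - 1) * ((n - l - 1).choose (n - j) : ℚ) * (n.choose l : ℚ) *
        (1 / ((n - l : ℕ) : ℚ) ^ (r+1)) by rw [Finset.sum_range_succ, htop, add_zero]]
  rw [Finset.sum_div, ← Finset.sum_add_distrib]
  refine Finset.sum_congr rfl ?_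
  intro l hl
  rw [Finset.mem_range] at hl
  have hl' : l ≤ j := Nat.lt_succ_iff.mp hl
  have hln : l < n := lt_of_le_of_lt hl' hjn
  have hnl : ((n - l : ℕ) : ℚ) ≠ 0 := by
    have : 0 < n - l := Nat.sub_pos_of_lt hln
    positivity
  have ratio : ((n - l : ℕ) : ℚ) * ((n - l - 1).choose (n - j - 1) : ℚ) =
      ((n - l).choose (n - j) : ℚ) * ((n - j : ℕ) : ℚ) := by
    have e1 : n - l = (n - l - 1) + 1 := by omega
    have e2 : n - j = (n - j - 1) + 1 := by omega
    have := Nat.add_one_mul_choose_eq (n - l - 1) (n - j - 1)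
    rw [e1, e2]
    exact_mod_cast this
  have key : ((n - l : ℕ) : ℚ) * ((n - l - 1).choose (n - j - 1) : ℚ) =
      (((n - l - 1).choose (n - j - 1) : ℚ) + ((n - l - 1).choose (n - j) : ℚ)) *
        ((n - j : ℕ) : ℚ) := by
    rw [ratio]
    congr 1
    have e1 : n - l = (n - l - 1) + 1 := by omega
    have e2 : n - j = (n - j - 1) + 1 := by omega
    rw [e1, e2, Nat.choose_succ_succ']
    push_cast
    ring
  have hs1 : j + 1 - l - 1 = j - l := by omega
  rw [hs1]
  have expand : (1 / ((n - l : ℕ) : ℚ) ^ (r+1)) =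
      (1 / ((n - l : ℕ) : ℚ) ^ r) * (1 / ((n - l : ℕ) : ℚ)) := by
    rw [pow_succ]
    field_simp
  rw [expand]
  rcases eq_or_lt_of_le hl' with h | h
  · subst h
    have hB : ((n - l - 1).choose (n - l) : ℚ) = 0 := by
      norm_cast; exact Nat.choose_eq_zero_of_lt (by omega)
    have hA : ((n - l - 1).choose (n - l - 1) : ℚ) = 1 := by
      norm_cast; exact Nat.choose_self _
    rw [hB, hA]
    field_simp
    ring
  · have hsign : (-1 : ℚ) ^ (j - l) = -(-1 : ℚ) ^ (j - l - 1) := by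
      obtain ⟨m, hm⟩ : ∃ m, j - l = m + 1 := ⟨j - l - 1, by omega⟩
      rw [hm, Nat.add_sub_cancel, pow_succ]
      ring
    rw [hsign]
    linear_combination aux_alg ((n - l - 1).choose (n - j - 1) : ℚ)
      ((n - l - 1).choose (n - j) : ℚ) (n.choose l : ℚ) ((n - j : ℕ) : ℚ)
      ((n - l : ℕ) : ℚ) (1 / ((n - l : ℕ) : ℚ) ^ r) ((-1 : ℚ) ^ (j - l - 1)) hnl hnj key

private lemma trino (n j l : ℕ) (hl : l ≤ j) (hjn : j ≤ n) :
    (n - l).choose (n - j) * n.choose l = n.choose (n - j) * j.choose l := by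
  have h1 : n.choose l = n.choose (n - l) := (Nat.choose_symm (hl.trans hjn)).symm
  have h2 : n - j ≤ n - l := Nat.sub_le_sub_left hl n
  have h3 : n - l ≤ n := Nat.sub_le n l
  have h4 := Nat.choose_mul (n := n) h2
  have e1 : n - (n - j) = j := Nat.sub_sub_self hjn
  have e2 : (n - l) - (n - j) = j - l := by omega
  rw [h1, mul_comm, h4, e1, e2, Nat.choose_symm hl]

private lemma alt_zero (n j : ℕ) (hj : 1 ≤ j) (hjn : j ≤ n) :
    ∑ l ∈ Finset.range (j + 1), (-1 : ℚ) ^ (j - l) * ((n - l).choose (n - j) : ℚ) *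
      (n.choose l : ℚ) = 0 := by
  have hcast : ∀ l ∈ Finset.range (j + 1),
      (-1 : ℚ) ^ (j - l) * ((n - l).choose (n - j) : ℚ) * (n.choose l : ℚ)
        = (n.choose (n - j) : ℚ) * ((-1 : ℚ) ^ j * ((-1 : ℚ) ^ l * (j.choose l : ℚ))) := by
    intro l hl
    rw [Finset.mem_range, Nat.lt_succ_iff] at hl
    have ht : ((n - l).choose (n - j) : ℚ) * (n.choose l : ℚ) = (n.choose (n - j) : ℚ) *
        (j.choose l : ℚ) := by exact_mod_cast congrArg (Nat.cast : ℕ → ℚ) (trino n j l hl hjn)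
    have hsg : (-1 : ℚ) ^ (j - l) = (-1 : ℚ) ^ j * (-1 : ℚ) ^ l := by
      rw [← pow_add, show j + l = (j - l) + 2 * l from by omega, pow_add, pow_mul]
      norm_num
    rw [mul_assoc, ht, hsg]
    ring
  rw [Finset.sum_congr rfl hcast, ← Finset.mul_sum, ← Finset.mul_sum]
  have hz := Int.alternating_sum_range_choose_of_ne (show j ≠ 0 by omega)
  have hzq : (∑ l ∈ Finset.range (j + 1), (-1 : ℚ) ^ l * (j.choose l : ℚ)) = 0 := by
    exact_mod_cast congrArg (Int.cast : ℤ → ℚ) hz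
  rw [hzq]
  ring

private lemma S_zero (n j : ℕ) (hj : 1 ≤ j) (hjn : j ≤ n) : S n 0 j = 1 := by
  induction j, hj using Nat.le_induction with
  | base =>
    unfold S
    rw [Finset.sum_range_one]
    simp
  | succ j hj ih =>
    have hjn' : j < n := hjn
    have ihv := ih (le_of_lt hjn')
    unfold S at ihv ⊢
    simp only [pow_zero, div_one, mul_one] at ihv ⊢
    have split : ∀ l ∈ Finset.range (j + 1),
        (-1 : ℚ) ^ (j + 1 - l - 1) * ((n - l - 1).choose (n - (j + 1)) : ℚ) * (n.choose l : ℚ)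
          = (-1 : ℚ) ^ (j - l) * ((n - l).choose (n - j) : ℚ) * (n.choose l : ℚ)
            + (-1 : ℚ) ^ (j - l - 1) * ((n - l - 1).choose (n - j) : ℚ) * (n.choose l : ℚ) := by
      intro l hl
      rw [Finset.mem_range, Nat.lt_succ_iff] at hl
      have hs1 : j + 1 - l - 1 = j - l := by omega
      have pascal : ((n - l).choose (n - j) : ℚ) =
          ((n - l - 1).choose (n - (j + 1)) : ℚ) + ((n - l - 1).choose (n - j) : ℚ) := by
        have e1 : n - l = (n - l - 1) + 1 := by omega
        have e2 : n - j = (n - (j + 1)) + 1 := by omega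
        rw [e1, e2, Nat.choose_succ_succ']
        push_cast
        ring
      rw [hs1, pascal]
      rcases eq_or_lt_of_le hl with h | h
      · subst h
        have hB : ((n - l - 1).choose (n - l) : ℚ) = 0 := by
          norm_cast; exact Nat.choose_eq_zero_of_lt (by omega)
        rw [hB]
        ring
      · have hsign : (-1 : ℚ) ^ (j - l - 1) = -(-1 : ℚ) ^ (j - l) := by
          obtain ⟨m, hm⟩ : ∃ m, j - l = m + 1 := ⟨j - l - 1, by omega⟩
          rw [hm, Nat.add_sub_cancel, pow_succ]
          ring
        rw [hsign]
        ring
    rw [Finset.sum_congr rfl split, Finset.sum_add_distrib,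
      alt_zero n j hj (le_of_lt hjn'), zero_add, Finset.sum_range_succ]
    have htop : (-1 : ℚ) ^ (j - j - 1) * ((n - j - 1).choose (n - j) : ℚ) * (n.choose j : ℚ)
        = 0 := by
      have : (n - j - 1).choose (n - j) = 0 := Nat.choose_eq_zero_of_lt (by omega)
      simp [this]
    rw [htop, add_zero, ihv]

private lemma harmonic'_succ (r k : ℕ) :
    harmonic' r (k + 1) = harmonic' r k + 1 / ((k + 1 : ℕ) : ℚ) ^ r := by
  unfold harmonic'
  rw [← Finset.Ico_add_one_right_eq_Icc, Finset.sum_Ico_succ_top (by omega), Finset.Ico_add_one_right_eq_Icc]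

private lemma main_aux (n j : ℕ) (hj : 1 ≤ j) (hjn : j ≤ n) :
    S n 1 j = (harmonic' 1 n - harmonic' 1 (n - j)) ∧
    S n 2 j = ((harmonic' 1 n - harmonic' 1 (n - j)) ^ 2 +
        (harmonic' 2 n - harmonic' 2 (n - j))) / 2 ∧
    S n 3 j = (harmonic' 1 n - harmonic' 1 (n - j)) ^ 3 / 6 +
        (harmonic' 1 n - harmonic' 1 (n - j)) * (harmonic' 2 n - harmonic' 2 (n - j)) / 2 +
        (harmonic' 3 n - harmonic' 3 (n - j)) / 3 := by
  induction j, hj using Nat.le_induction with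
  | base =>
    have hS : ∀ r : ℕ, S n r 1 = 1 / ((n : ℚ)) ^ r := by
      intro r
      unfold S
      rw [Finset.sum_range_one]
      simp
    have hh : ∀ r : ℕ, harmonic' r n - harmonic' r (n - 1) = 1 / ((n : ℚ)) ^ r := by
      intro r
      have h := harmonic'_succ r (n - 1)
      rw [show n - 1 + 1 = n from by omega] at h
      rw [h]
      ring
    refine ⟨?_, ?_, ?_⟩ <;> simp only [hS, hh] <;> ring
  | succ j hj ih =>
    have hjn' : j < n := hjn
    obtain ⟨ih1, ih2, ih3⟩ := ih (le_of_lt hjn')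
    have hstep : ∀ r : ℕ, harmonic' r (n - j) =
        harmonic' r (n - (j + 1)) + 1 / ((n - j : ℕ) : ℚ) ^ r := by
      intro r
      have h := harmonic'_succ r (n - (j + 1))
      rw [show n - (j + 1) + 1 = n - j from by omega] at h
      exact h
    have hS0 : S n 0 (j + 1) = 1 := S_zero n (j + 1) (by omega) hjn
    have r1 : S n 1 (j + 1) = S n 1 j + 1 / ((n - j : ℕ) : ℚ) := by
      have h := S_succ n 0 j hjn'
      rw [hS0] at h
      simpa using h
    have r2 : S n 2 (j + 1) = S n 2 j + S n 1 (j + 1) / ((n - j : ℕ) : ℚ) := by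
      simpa using S_succ n 1 j hjn'
    have r3 : S n 3 (j + 1) = S n 3 j + S n 2 (j + 1) / ((n - j : ℕ) : ℚ) := by
      simpa using S_succ n 2 j hjn'
    refine ⟨?_, ?_, ?_⟩
    · rw [r1, ih1, hstep 1]; ring
    · rw [r2, r1, ih1, ih2, hstep 1, hstep 2]; ring
    · rw [r3, r2, r1, ih1, ih2, ih3, hstep 1, hstep 2, hstep 3]; ring

theorem binomial_sum_inverse_cube (n j : ℕ) (hj : 1 ≤ j) (hjn : j ≤ n) :
    ∑ l ∈ Finset.range j,
        (-1 : ℚ) ^ (j - l - 1) * ((n - l - 1).choose (n - j) : ℚ) * (n.choose l : ℚ) *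
          (1 / ((n - l : ℕ) : ℚ) ^ 3) =
      (harmonic' 1 n - harmonic' 1 (n - j)) ^ 3 / 6 +
        (harmonic' 1 n - harmonic' 1 (n - j)) * (harmonic' 2 n - harmonic' 2 (n - j)) / 2 +
        (harmonic' 3 n - harmonic' 3 (n - j)) / 3 := by
  have h := (main_aux n j hj hjn).2.2
  unfold S at h
  exact h
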